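/- There exists a solvable MPP instance (G, R, x_I, x_G) such that no solution simultaneously attains the minimum total distance and the minimum maximum distance; i.e., every solution whose maximum distance equals the minimum maximum distance over all solutions has total distance strictly greater than the minimum total distance over all solutions. -/

import Mathlib

/-!
Formalization of multi-robot path planning on graphs (MPP).

An MPP instance consists of a connected simple graph `G` on a vertex type `V`,
a finite set of robots (an index type `R`), and injective start/goal
configurations `xI xG : R → V`.  A scheduled path is a map `ℕ → V`.
-/

namespace MPPFormal

variable {V R : Type}

/-- The arrival time of a path `p` with goal `g`: the smallest time `t`
with `p t = g`. -/
noncomputable def arrivalTime (g : V) (p : ℕ → V) : ℕ := sInf {t | p t = g}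

/-- A feasible scheduled path from `s` to `g` in the graph `G`:
it starts at `s`, reaches `g` at some time, stays at `g` forever after the
first time it reaches `g`, and at every time step it either traverses an
edge of `G` or stays put. -/
def FeasiblePath (G : SimpleGraph V) (s g : V) (p : ℕ → V) : Prop :=
  p 0 = s ∧ (∃ t, p t = g) ∧ (∀ t, arrivalTime g p ≤ t → p t = g) ∧
    ∀ t, G.Adj (p t) (p (t + 1)) ∨ p t = p (t + 1)

/-- Two scheduled paths collide if they meet at the same vertex at the same
time, or if they swap along an edge head-on. -/
def Collide (p q : ℕ → V) : Prop :=
  (∃ t, p t = q t) ∨ ∃ t, p t = q (t + 1) ∧ p (t + 1) = q t ∧ p t ≠ p (t + 1)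

/-- The length of a scheduled path: the number of time steps at which it
actually moves. -/
noncomputable def pathLen (p : ℕ → V) : ℕ := Set.ncard {t | p t ≠ p (t + 1)}

/-- A solution to the MPP instance `(G, R, xI, xG)`: a family of pairwise
non-colliding feasible paths, one per robot. -/
def IsSolution (G : SimpleGraph V) (xI xG : R → V) (p : R → ℕ → V) : Prop :=
  (∀ i, FeasiblePath G (xI i) (xG i) (p i)) ∧
    Pairwise fun i j => ¬ Collide (p i) (p j)

/-- `(G, xI, xG)` together with the robot index type `R` forms an MPP
instance: the graph is connected and the start and goal configurations are
injective. -/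
def IsMPPInstance (G : SimpleGraph V) (xI xG : R → V) : Prop :=
  G.Connected ∧ Function.Injective xI ∧ Function.Injective xG

variable [Fintype R]

/-- Total arrival time of a solution. -/
noncomputable def totalTime (xG : R → V) (p : R → ℕ → V) : ℕ :=
  ∑ i, arrivalTime (xG i) (p i)

/-- Makespan (last arrival time) of a solution. -/
noncomputable def makespan (xG : R → V) (p : R → ℕ → V) : ℕ :=
  Finset.univ.sup fun i => arrivalTime (xG i) (p i)

/-- Total distance traveled in a solution. -/
noncomputable def totalDist (p : R → ℕ → V) : ℕ := ∑ i, pathLen (p i)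

/-- Maximum single-robot distance of a solution. -/
noncomputable def maxDist (p : R → ℕ → V) : ℕ :=
  Finset.univ.sup fun i => pathLen (p i)

/-- Minimum total arrival time over all solutions. -/
noncomputable def minTotalTime (G : SimpleGraph V) (xI xG : R → V) : ℕ :=
  sInf {c | ∃ p, IsSolution G xI xG p ∧ totalTime xG p = c}

/-- Minimum makespan over all solutions. -/
noncomputable def minMakespan (G : SimpleGraph V) (xI xG : R → V) : ℕ :=
  sInf {c | ∃ p, IsSolution G xI xG p ∧ makespan xG p = c}

/-- Minimum total distance over all solutions. -/
noncomputable def minTotalDist (G : SimpleGraph V) (xI xG : R → V) : ℕ :=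
  sInf {c | ∃ p, IsSolution G xI xG p ∧ totalDist p = c}

/-- Minimum maximum distance over all solutions. -/
noncomputable def minMaxDist (G : SimpleGraph V) (xI xG : R → V) : ℕ :=
  sInf {c | ∃ p, IsSolution G xI xG p ∧ maxDist p = c}

end MPPFormal

namespace MPPFormal

variable {V : Type}

-- ## auxiliary general lemmas

lemma collide_symm {p q : ℕ → V} (h : Collide p q) : Collide q p := by
  rcases h with ⟨t, h⟩ | ⟨t, h1, h2, h3⟩
  · exact Or.inl ⟨t, h.symm⟩
  · exact Or.inr ⟨t, h2.symm, h1.symm, fun he => h3 ((h1.trans he.symm).trans h2.symm)⟩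

lemma const_run {p : ℕ → V} {m n : ℕ} (hmn : m ≤ n)
    (h : ∀ t, m ≤ t → t < n → p t = p (t + 1)) : p m = p n := by
  induction n with
  | zero => obtain rfl := Nat.le_zero.mp hmn; rfl
  | succ n ih =>
    rcases Nat.eq_or_lt_of_le hmn with rfl | hlt
    · rfl
    · have hm : m ≤ n := Nat.lt_succ_iff.mp hlt
      rw [ih hm (fun t ht1 ht2 => h t ht1 (ht2.trans (Nat.lt_succ_self n)))]
      exact h n hm (Nat.lt_succ_self n)

lemma arrival_helper {p : ℕ → V} {gl : V} (T : ℕ) (h1 : ∀ t, t < T → p t ≠ gl)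
    (h2 : ∀ t, T ≤ t → p t = gl) : ∀ t, arrivalTime gl p ≤ t → p t = gl := by
  have hne : ({t | p t = gl} : Set ℕ).Nonempty := ⟨T, h2 T le_rfl⟩
  have hmem := Nat.sInf_mem hne
  have hT : T ≤ sInf {t | p t = gl} := by
    by_contra h; push_neg at h; exact h1 _ h hmem
  intro t ht; exact h2 t (hT.trans ht)

lemma jumps_finite {G : SimpleGraph V} {s g : V} {p : ℕ → V}
    (hf : FeasiblePath G s g p) : {t | p t ≠ p (t + 1)}.Finite := by
  apply Set.Finite.subset (Set.finite_Iio (arrivalTime g p))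
  intro t ht
  simp only [Set.mem_Iio]
  by_contra h
  push_neg at h
  exact ht ((hf.2.2.1 t h).trans (hf.2.2.1 (t+1) (h.trans (Nat.le_succ t))).symm)

/-- eventual value of a feasible path with no jumps after `T` is the goal -/
lemma eventual_goal {G : SimpleGraph V} {s g : V} {p : ℕ → V}
    (hf : FeasiblePath G s g p) {T : ℕ} (hT : ∀ t, T ≤ t → p t = p (t + 1)) :
    ∀ t, T ≤ t → p t = g := by
  intro t ht
  have h1 : p t = p (max t (arrivalTime g p)) := by
    apply const_run (le_max_left _ _)
    intro u hu _; exact hT u (ht.trans hu)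
  rw [h1]; exact hf.2.2.1 _ (le_max_right _ _)

lemma sort3 {a b c : ℕ} (hab : a ≠ b) (hac : a ≠ c) (hbc : b ≠ c) :
    ∃ x y z : ℕ, x < y ∧ y < z ∧ ({a, b, c} : Set ℕ) = {x, y, z} := by
  have hset : ∀ x y z : ℕ, (∀ t, (t = a ∨ t = b ∨ t = c) ↔ (t = x ∨ t = y ∨ t = z)) →
      ({a, b, c} : Set ℕ) = {x, y, z} := by
    intro x y z h; ext t
    simp only [Set.mem_insert_iff, Set.mem_singleton_iff]; exact h t
  rcases Ne.lt_or_gt hab with h1 | h1 <;> rcases Ne.lt_or_gt hac with h2 | h2 <;>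
    rcases Ne.lt_or_gt hbc with h3 | h3
  · exact ⟨a, b, c, h1, h3, hset _ _ _ (fun t => by tauto)⟩
  · exact ⟨a, c, b, h2, h3, hset _ _ _ (fun t => by tauto)⟩
  · omega
  · exact ⟨c, a, b, h2, h1, hset _ _ _ (fun t => by tauto)⟩
  · exact ⟨b, a, c, h1, h2, hset _ _ _ (fun t => by tauto)⟩
  · omega
  · exact ⟨b, c, a, h3, h2, hset _ _ _ (fun t => by tauto)⟩
  · exact ⟨c, b, a, h3, h1, hset _ _ _ (fun t => by tauto)⟩


section Structure

variable {G : SimpleGraph V} {s g : V} {p : ℕ → V}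

lemma structure0 (hf : FeasiblePath G s g p) (hlen : pathLen p = 0) : s = g := by
  have hS : {t | p t ≠ p (t + 1)} = ∅ := (Set.ncard_eq_zero (jumps_finite hf)).mp hlen
  have hnj : ∀ t, p t = p (t + 1) := by
    intro t; by_contra hc
    exact absurd (hS ▸ hc : (t : ℕ) ∈ (∅ : Set ℕ)) (Set.notMem_empty t)
  rw [← hf.1]
  exact eventual_goal hf (T := 0) (fun t _ => hnj t) 0 le_rfl

lemma structure1 (hf : FeasiblePath G s g p) (hlen : pathLen p = 1) :
    ∃ a, (∀ t, t ≤ a → p t = s) ∧ (∀ t, a < t → p t = g) ∧ G.Adj s g := by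
  obtain ⟨a, hS⟩ := Set.ncard_eq_one.mp hlen
  have hnj : ∀ t, t ≠ a → p t = p (t + 1) := by
    intro t ht; by_contra hc
    exact ht (by simpa using (hS ▸ hc : (t : ℕ) ∈ ({a} : Set ℕ)))
  have hblk0 : ∀ t, t ≤ a → p t = s := fun t ht =>
    (const_run (Nat.zero_le t) (fun u _ hu2 => hnj u (by omega))).symm.trans hf.1
  have hblk1 : ∀ t, a < t → p t = g := fun t ht =>
    eventual_goal hf (T := a + 1) (fun u hu => hnj u (by omega)) t (by omega)
  have hja : p a ≠ p (a + 1) := by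
    have : (a : ℕ) ∈ ({a} : Set ℕ) := rfl
    rw [← hS] at this; exact this
  have hadj := (hf.2.2.2 a).resolve_right hja
  rw [hblk0 a le_rfl, hblk1 (a + 1) (Nat.lt_succ_self a)] at hadj
  exact ⟨a, hblk0, hblk1, hadj⟩

lemma structure2 (hf : FeasiblePath G s g p) (hlen : pathLen p = 2) :
    ∃ v, G.Adj s v ∧ G.Adj v g := by
  obtain ⟨x, y, hxy, hSxy⟩ := Set.ncard_eq_two.mp hlen
  obtain ⟨a, b, hab, hS⟩ : ∃ a b, a < b ∧ {t | p t ≠ p (t + 1)} = {a, b} := by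
    rcases hxy.lt_or_gt with h | h
    · exact ⟨x, y, h, hSxy⟩
    · exact ⟨y, x, h, by rw [hSxy, Set.pair_comm]⟩
  have hnj : ∀ t, t ≠ a → t ≠ b → p t = p (t + 1) := by
    intro t h1 h2; by_contra hc
    have := (hS ▸ hc : (t : ℕ) ∈ ({a, b} : Set ℕ))
    simp only [Set.mem_insert_iff, Set.mem_singleton_iff] at this; tauto
  have hmem : ∀ t, t = a ∨ t = b → p t ≠ p (t + 1) := by
    intro t ht
    have : t ∈ ({a, b} : Set ℕ) := by
      simp only [Set.mem_insert_iff, Set.mem_singleton_iff]; exact ht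
    rw [← hS] at this; exact this
  have hblk0 : ∀ t, t ≤ a → p t = s := fun t ht =>
    (const_run (Nat.zero_le t) (fun u _ hu2 => hnj u (by omega) (by omega))).symm.trans hf.1
  have hblk1 : ∀ t, a < t → t ≤ b → p t = p (a + 1) := fun t h1 h2 =>
    (const_run (show a + 1 ≤ t by omega) (fun u hu1 hu2 => hnj u (by omega) (by omega))).symm
  have hblk2 : ∀ t, b < t → p t = g := fun t ht =>
    eventual_goal hf (T := b + 1) (fun u hu => hnj u (by omega) (by omega)) t (by omega)
  have hadj1 := (hf.2.2.2 a).resolve_right (fun hc => hmem a (Or.inl rfl) hc)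
  have hadj2 := (hf.2.2.2 b).resolve_right (fun hc => hmem b (Or.inr rfl) hc)
  rw [hblk0 a le_rfl] at hadj1
  rw [hblk1 b hab le_rfl, hblk2 (b + 1) (Nat.lt_succ_self b)] at hadj2
  exact ⟨p (a + 1), hadj1, hadj2⟩

lemma structure3 (hf : FeasiblePath G s g p) (hlen : pathLen p = 3) :
    ∃ a b c v1 v2, a < b ∧ b < c ∧
      (∀ t, t ≤ a → p t = s) ∧ (∀ t, a < t → t ≤ b → p t = v1) ∧
      (∀ t, b < t → t ≤ c → p t = v2) ∧ (∀ t, c < t → p t = g) ∧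
      G.Adj s v1 ∧ G.Adj v1 v2 ∧ G.Adj v2 g := by
  obtain ⟨x, y, z, hxy, hxz, hyz, hSxyz⟩ := Set.ncard_eq_three.mp hlen
  obtain ⟨a, b, c, hab, hbc, hS⟩ :
      ∃ a b c, a < b ∧ b < c ∧ {t | p t ≠ p (t + 1)} = {a, b, c} := by
    obtain ⟨a, b, c, h1, h2, h3⟩ := sort3 hxy hxz hyz
    exact ⟨a, b, c, h1, h2, by rw [hSxyz, h3]⟩
  have hnj : ∀ t, t ≠ a → t ≠ b → t ≠ c → p t = p (t + 1) := by
    intro t h1 h2 h3; by_contra hc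
    have := (hS ▸ hc : (t : ℕ) ∈ ({a, b, c} : Set ℕ))
    simp only [Set.mem_insert_iff, Set.mem_singleton_iff] at this; tauto
  have hmem : ∀ t, t = a ∨ t = b ∨ t = c → p t ≠ p (t + 1) := by
    intro t ht
    have : t ∈ ({a, b, c} : Set ℕ) := by
      simp only [Set.mem_insert_iff, Set.mem_singleton_iff]; exact ht
    rw [← hS] at this; exact this
  have hblk0 : ∀ t, t ≤ a → p t = s := fun t ht =>
    (const_run (Nat.zero_le t)
      (fun u _ hu2 => hnj u (by omega) (by omega) (by omega))).symm.trans hf.1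
  have hblk1 : ∀ t, a < t → t ≤ b → p t = p (a + 1) := fun t h1 h2 =>
    (const_run (show a + 1 ≤ t by omega)
      (fun u hu1 hu2 => hnj u (by omega) (by omega) (by omega))).symm
  have hblk2 : ∀ t, b < t → t ≤ c → p t = p (b + 1) := fun t h1 h2 =>
    (const_run (show b + 1 ≤ t by omega)
      (fun u hu1 hu2 => hnj u (by omega) (by omega) (by omega))).symm
  have hblk3 : ∀ t, c < t → p t = g := fun t ht =>
    eventual_goal hf (T := c + 1)
      (fun u hu => hnj u (by omega) (by omega) (by omega)) t (by omega)
  have hadj1 := (hf.2.2.2 a).resolve_right (fun hc => hmem a (Or.inl rfl) hc)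
  have hadj2 := (hf.2.2.2 b).resolve_right (fun hc => hmem b (Or.inr (Or.inl rfl)) hc)
  have hadj3 := (hf.2.2.2 c).resolve_right (fun hc => hmem c (Or.inr (Or.inr rfl)) hc)
  rw [hblk0 a le_rfl] at hadj1
  rw [hblk1 b hab le_rfl, hblk2 (b + 1) (Nat.lt_succ_self b) (by omega)] at hadj2
  rw [hblk2 c hbc le_rfl, hblk3 (c + 1) (Nat.lt_succ_self c)] at hadj3
  exact ⟨a, b, c, p (a + 1), p (b + 1), hab, hbc, hblk0, hblk1, hblk2, hblk3,
    hadj1, hadj2, hadj3⟩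

lemma pathLen_le_of_subset {p : ℕ → V} {F : Finset ℕ}
    (h : {t | p t ≠ p (t + 1)} ⊆ ↑F) : pathLen p ≤ F.card := by
  have := Set.ncard_le_ncard h F.finite_toSet
  rwa [Set.ncard_coe_finset] at this

end Structure



def edges8 : List (Fin 8 × Fin 8) :=
  [(0,1),(1,2),(2,3),(2,4),(0,5),(5,6),(6,7),(7,3)]

def G8 : SimpleGraph (Fin 8) where
  Adj a b := (a, b) ∈ edges8 ∨ (b, a) ∈ edges8
  symm := by constructor; decide
  loopless := by constructor; decide

instance : DecidableRel G8.Adj := fun a b =>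
  inferInstanceAs (Decidable (_ ∨ _))

lemma G8_connected : G8.Connected := by
  rw [SimpleGraph.connected_iff]
  refine ⟨?_, ⟨0⟩⟩
  have a01 : G8.Adj 0 1 := by decide
  have a12 : G8.Adj 1 2 := by decide
  have a23 : G8.Adj 2 3 := by decide
  have a24 : G8.Adj 2 4 := by decide
  have a05 : G8.Adj 0 5 := by decide
  have a56 : G8.Adj 5 6 := by decide
  have a67 : G8.Adj 6 7 := by decide
  have r2 : G8.Reachable 0 2 := a01.reachable.trans a12.reachable
  have r5 : G8.Reachable 0 5 := a05.reachable
  have h : ∀ v : Fin 8, G8.Reachable 0 v := by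
    intro v
    fin_cases v
    · rfl
    · exact a01.reachable
    · exact r2
    · exact r2.trans a23.reachable
    · exact r2.trans a24.reachable
    · exact r5
    · exact r5.trans a56.reachable
    · exact r5.trans (a56.reachable.trans a67.reachable)
  intro u v
  exact (h u).symm.trans (h v)

def PA : ℕ → Fin 8
  | 0 => 0 | 1 => 5 | 2 => 6 | 3 => 7 | _ + 4 => 3

def PB : ℕ → Fin 8
  | 0 => 2 | _ + 1 => 1

def QA : ℕ → Fin 8
  | 0 => 0 | 1 => 1 | 2 => 2 | _ + 3 => 3

def QB : ℕ → Fin 8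
  | 0 => 2 | 1 => 4 | 2 => 4 | 3 => 2 | _ + 4 => 1

example : PA 7 = 3 := rfl
example : ∀ t, PB (t+1) = 1 := fun t => rfl

lemma feas_PA : FeasiblePath G8 0 3 PA := by
  refine ⟨rfl, ⟨4, rfl⟩, arrival_helper 4 ?_ ?_, ?_⟩
  · intro t ht; interval_cases t <;> decide
  · intro t ht
    obtain ⟨m, rfl⟩ := Nat.exists_eq_add_of_le ht
    rw [Nat.add_comm]; rfl
  · intro t
    rcases t with _ | _ | _ | _ | t
    · exact Or.inl (by decide)
    · exact Or.inl (by decide)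
    · exact Or.inl (by decide)
    · exact Or.inl (by decide)
    · exact Or.inr rfl

lemma feas_PB : FeasiblePath G8 2 1 PB := by
  refine ⟨rfl, ⟨1, rfl⟩, arrival_helper 1 ?_ ?_, ?_⟩
  · intro t ht; interval_cases t <;> decide
  · intro t ht
    obtain ⟨m, rfl⟩ := Nat.exists_eq_add_of_le ht
    rw [Nat.add_comm]; rfl
  · intro t
    rcases t with _ | t
    · exact Or.inl (by decide)
    · exact Or.inr rfl

lemma feas_QA : FeasiblePath G8 0 3 QA := by
  refine ⟨rfl, ⟨3, rfl⟩, arrival_helper 3 ?_ ?_, ?_⟩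
  · intro t ht; interval_cases t <;> decide
  · intro t ht
    obtain ⟨m, rfl⟩ := Nat.exists_eq_add_of_le ht
    rw [Nat.add_comm]; rfl
  · intro t
    rcases t with _ | _ | _ | t
    · exact Or.inl (by decide)
    · exact Or.inl (by decide)
    · exact Or.inl (by decide)
    · exact Or.inr rfl

lemma feas_QB : FeasiblePath G8 2 1 QB := by
  refine ⟨rfl, ⟨4, rfl⟩, arrival_helper 4 ?_ ?_, ?_⟩
  · intro t ht; interval_cases t <;> decide
  · intro t ht
    obtain ⟨m, rfl⟩ := Nat.exists_eq_add_of_le ht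
    rw [Nat.add_comm]; rfl
  · intro t
    rcases t with _ | _ | _ | _ | t
    · exact Or.inl (by decide)
    · exact Or.inr rfl
    · exact Or.inl (by decide)
    · exact Or.inl (by decide)
    · exact Or.inr rfl

lemma not_collide_P : ¬ Collide PA PB := by
  rintro (⟨t, ht⟩ | ⟨t, h1, h2, h3⟩)
  · rcases t with _ | _ | _ | _ | t
    · exact absurd ht (by decide)
    · exact absurd ht (by decide)
    · exact absurd ht (by decide)
    · exact absurd ht (by decide)
    · exact (show (3 : Fin 8) ≠ 1 by decide) ht
  · rcases t with _ | _ | _ | _ | t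
    · exact absurd h1 (by decide)
    · exact absurd h1 (by decide)
    · exact absurd h1 (by decide)
    · exact absurd h1 (by decide)
    · exact (show (3 : Fin 8) ≠ 1 by decide) h1

lemma not_collide_Q : ¬ Collide QA QB := by
  rintro (⟨t, ht⟩ | ⟨t, h1, h2, h3⟩)
  · rcases t with _ | _ | _ | _ | t
    · exact absurd ht (by decide)
    · exact absurd ht (by decide)
    · exact absurd ht (by decide)
    · exact absurd ht (by decide)
    · exact (show (3 : Fin 8) ≠ 1 by decide) ht
  · rcases t with _ | _ | _ | _ | t
    · exact absurd h1 (by decide)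
    · exact absurd h1 (by decide)
    · exact absurd h2 (by decide)
    · exact absurd h1 (by decide)
    · exact (show (3 : Fin 8) ≠ 1 by decide) h1

lemma PA_len : pathLen PA ≤ 4 := by
  have h := pathLen_le_of_subset (p := PA) (F := {0, 1, 2, 3}) ?_
  · simpa using h
  · intro t ht
    simp only [Finset.coe_insert, Set.mem_insert_iff, Finset.coe_singleton,
      Set.mem_singleton_iff]
    by_contra hc
    push_neg at hc
    obtain ⟨h0, h1, h2, h3⟩ := hc
    have h4 : 4 ≤ t := by omega
    obtain ⟨m, rfl⟩ := Nat.exists_eq_add_of_le h4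
    exact ht (by rw [Nat.add_comm 4 m]; rfl)

lemma PB_len : pathLen PB ≤ 1 := by
  have h := pathLen_le_of_subset (p := PB) (F := {0}) ?_
  · simpa using h
  · intro t ht
    simp only [Finset.coe_singleton, Set.mem_singleton_iff]
    by_contra hc
    have h4 : 1 ≤ t := by omega
    obtain ⟨m, rfl⟩ := Nat.exists_eq_add_of_le h4
    exact ht (by rw [Nat.add_comm 1 m]; rfl)

lemma QA_len : pathLen QA ≤ 3 := by
  have h := pathLen_le_of_subset (p := QA) (F := {0, 1, 2}) ?_
  · simpa using h
  · intro t ht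
    simp only [Finset.coe_insert, Set.mem_insert_iff, Finset.coe_singleton,
      Set.mem_singleton_iff]
    by_contra hc
    push_neg at hc
    obtain ⟨h0, h1, h2⟩ := hc
    have h4 : 3 ≤ t := by omega
    obtain ⟨m, rfl⟩ := Nat.exists_eq_add_of_le h4
    exact ht (by rw [Nat.add_comm 3 m]; rfl)

lemma QB_len : pathLen QB ≤ 3 := by
  have h := pathLen_le_of_subset (p := QB) (F := {0, 2, 3}) ?_
  · simpa using h
  · intro t ht
    simp only [Finset.coe_insert, Set.mem_insert_iff, Finset.coe_singleton,
      Set.mem_singleton_iff]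
    by_contra hc
    push_neg at hc
    obtain ⟨h0, h2, h3⟩ := hc
    rcases t with _ | _ | _ | _ | m
    · omega
    · exact ht rfl
    · omega
    · omega
    · exact ht rfl


def xI8 : Fin 2 → Fin 8 := ![0, 2]
def xG8 : Fin 2 → Fin 8 := ![3, 1]
def solP : Fin 2 → ℕ → Fin 8 := ![PA, PB]
def solQ : Fin 2 → ℕ → Fin 8 := ![QA, QB]

lemma solP_is : IsSolution G8 xI8 xG8 solP := by
  constructor
  · intro i
    fin_cases i
    · exact feas_PA
    · exact feas_PB
  · intro i j hij
    fin_cases i <;> fin_cases j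
    · exact absurd rfl hij
    · exact not_collide_P
    · exact fun c => not_collide_P (collide_symm c)
    · exact absurd rfl hij

lemma solQ_is : IsSolution G8 xI8 xG8 solQ := by
  constructor
  · intro i
    fin_cases i
    · exact feas_QA
    · exact feas_QB
  · intro i j hij
    fin_cases i <;> fin_cases j
    · exact absurd rfl hij
    · exact not_collide_Q
    · exact fun c => not_collide_Q (collide_symm c)
    · exact absurd rfl hij

lemma totalP : totalDist solP ≤ 5 := by
  have : totalDist solP = pathLen PA + pathLen PB := Fin.sum_univ_two _
  rw [this]
  have := PA_len; have := PB_len; omega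

lemma maxQ : maxDist solQ ≤ 3 := by
  apply Finset.sup_le
  intro i _
  fin_cases i
  · exact QA_len
  · exact QB_len

/-- Key forcing lemma: any solution where both robots move at most 3 steps
must have both moving exactly 3 steps. -/
lemma forcing {p0 p1 : ℕ → Fin 8} (hf0 : FeasiblePath G8 0 3 p0)
    (hf1 : FeasiblePath G8 2 1 p1) (hnc : ¬ Collide p0 p1)
    (h0 : pathLen p0 ≤ 3) (h1 : pathLen p1 ≤ 3) :
    pathLen p0 = 3 ∧ pathLen p1 = 3 := by
  -- robot A must make exactly 3 moves, along 0-1-2-3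
  have hA3 : pathLen p0 = 3 := by
    have hcases : pathLen p0 = 0 ∨ pathLen p0 = 1 ∨ pathLen p0 = 2 ∨ pathLen p0 = 3 := by
      omega
    rcases hcases with h | h | h | h
    · exact absurd (structure0 hf0 h) (by decide)
    · obtain ⟨a, -, -, hadj⟩ := structure1 hf0 h
      exact absurd hadj (by decide)
    · obtain ⟨v, hv1, hv2⟩ := structure2 hf0 h
      exact absurd ⟨v, hv1, hv2⟩
        (by decide : ¬ ∃ v : Fin 8, G8.Adj 0 v ∧ G8.Adj v 3)
    · exact h
  obtain ⟨a, b, c, v1, v2, hab, hbc, hblk0, hblk1, hblk2, hblk3, hadj1, hadj2, hadj3⟩ :=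
    structure3 hf0 hA3
  have hpin : ∀ w1 w2 : Fin 8, G8.Adj 0 w1 → G8.Adj w1 w2 → G8.Adj w2 3 →
      w1 = 1 ∧ w2 = 2 := by decide
  obtain ⟨rfl, rfl⟩ := hpin v1 v2 hadj1 hadj2 hadj3
  have hB3 : pathLen p1 = 3 := by
    have hcases : pathLen p1 = 0 ∨ pathLen p1 = 1 ∨ pathLen p1 = 2 ∨ pathLen p1 = 3 := by
      omega
    rcases hcases with h | h | h | h
    · exact absurd (structure0 hf1 h) (by decide)
    · -- the interesting case: B makes a single move 2 → 1 at some time d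
      obtain ⟨d, hB0, hB1, -⟩ := structure1 hf1 h
      have hdb : ¬ d < b := fun hdb => hnc (Or.inl ⟨b, by
        rw [hblk1 b hab le_rfl, hB1 b hdb]⟩)
      have hbd : ¬ b < d := fun hbd => hnc (Or.inl ⟨b + 1, by
        rw [hblk2 (b + 1) (Nat.lt_succ_self b) (by omega), hB0 (b + 1) (by omega)]⟩)
      have hd : d = b := by omega
      subst hd
      refine absurd (Or.inr ⟨d, ?_, ?_, ?_⟩) hnc
      · rw [hblk1 d hab le_rfl, hB1 (d + 1) (Nat.lt_succ_self d)]
      · rw [hblk2 (d + 1) (Nat.lt_succ_self d) (by omega), hB0 d le_rfl]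
      · rw [hblk1 d hab le_rfl, hblk2 (d + 1) (Nat.lt_succ_self d) (by omega)]
        decide
    · obtain ⟨v, hv1, hv2⟩ := structure2 hf1 h
      exact absurd ⟨v, hv1, hv2⟩
        (by decide : ¬ ∃ v : Fin 8, G8.Adj 2 v ∧ G8.Adj v 1)
    · exact h
  exact ⟨hA3, hB3⟩



/-- There exists a solvable MPP instance such that every solution attaining
the minimum maximum distance has total distance strictly greater than the
minimum total distance. -/
theorem pareto_totalDist_maxDist :
    ∃ (k : ℕ) (V : Type) (G : SimpleGraph V) (xI xG : Fin k → V),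
      IsMPPInstance G xI xG ∧ (∃ p, IsSolution G xI xG p) ∧
      ∀ p, IsSolution G xI xG p → maxDist p = minMaxDist G xI xG →
        minTotalDist G xI xG < totalDist p := by
  refine ⟨2, Fin 8, G8, xI8, xG8, ⟨G8_connected, by decide, by decide⟩,
    ⟨solP, solP_is⟩, ?_⟩
  intro p hsol hmax
  have hminmax_le : minMaxDist G8 xI8 xG8 ≤ 3 :=
    le_trans (Nat.sInf_le ⟨solQ, solQ_is, rfl⟩) maxQ
  have hm : maxDist p ≤ 3 := hmax ▸ hminmax_le
  have h0 : pathLen (p 0) ≤ 3 := le_trans (Finset.le_sup (f := fun i => pathLen (p i)) (Finset.mem_univ 0)) hm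
  have h1 : pathLen (p 1) ≤ 3 := le_trans (Finset.le_sup (f := fun i => pathLen (p i)) (Finset.mem_univ 1)) hm
  have hf0 : FeasiblePath G8 0 3 (p 0) := hsol.1 0
  have hf1 : FeasiblePath G8 2 1 (p 1) := hsol.1 1
  have hnc : ¬ Collide (p 0) (p 1) := hsol.2 (by decide)
  obtain ⟨e0, e1⟩ := forcing hf0 hf1 hnc h0 h1
  have htot : totalDist p = 6 := by
    rw [show totalDist p = pathLen (p 0) + pathLen (p 1) from Fin.sum_univ_two _, e0, e1]
  have hmin : minTotalDist G8 xI8 xG8 ≤ 5 :=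
    le_trans (Nat.sInf_le ⟨solP, solP_is, rfl⟩) totalP
  omega


end MPPFormal
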